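/- Let V be an FI-module with values in abelian groups. Define H₀(V)(T) = coker(⊕_{S ⊊ T} V(S) → V(T)), the cokernel of the map induced by all the inclusions of proper subsets. Then H₀ is a functor from FI-modules to FB-modules, and H₀ is left adjoint to the extension-by-zero functor α* sending an FB-module W to the FI-module that agrees with W on objects and bijections and sends every non-bijective injection to the zero map. -/

import Mathlib

open CategoryTheory Limits
open scoped Classical

/-- The category `FI` of finite sets (finite subsets of `ℕ`) and injections. -/
structure FIob where
  s : Finset ℕ

instance : Category FIob where
  Hom A B := {f : ↥A.s → ↥B.s // Function.Injective f}
  id A := ⟨id, fun _ _ h => h⟩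
  comp f g := ⟨g.1 ∘ f.1, g.2.comp f.2⟩

/-- The category `FB` of finite sets (finite subsets of `ℕ`) and bijections. -/
structure FBob where
  s : Finset ℕ

instance : Category FBob where
  Hom A B := {f : ↥A.s → ↥B.s // Function.Bijective f}
  id A := ⟨id, Function.bijective_id⟩
  comp f g := ⟨g.1 ∘ f.1, g.2.comp f.2⟩

/-- Extension by zero of an FB-module: the FI-module agreeing with `W` on objects and
bijections and sending every non-bijective injection to the zero map. -/
noncomputable def alphaStarObj (W : FBob ⥤ AddCommGrpCat) : FIob ⥤ AddCommGrpCat where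
  obj T := W.obj ⟨T.s⟩
  map {S T} f := if h : Function.Bijective f.1 then W.map ⟨f.1, h⟩ else 0
  map_id S := by
    dsimp only
    split
    · exact W.map_id ⟨S.s⟩
    · rename_i h
      exact absurd Function.bijective_id h
  map_comp {S T U} f g := by
    dsimp only
    split
    · rename_i h1
      split
      · rename_i h2
        split
        · rename_i h3
          exact W.map_comp (show (⟨S.s⟩ : FBob) ⟶ ⟨T.s⟩ from ⟨f.1, h2⟩)
            (show (⟨T.s⟩ : FBob) ⟶ ⟨U.s⟩ from ⟨g.1, h3⟩)
        · rename_i h3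
          exact absurd ⟨g.2, Function.Surjective.of_comp
            (show Function.Surjective (g.1 ∘ f.1) from h1.surjective)⟩ h3
      · rename_i h2
        refine absurd ⟨f.2, fun b => ?_⟩ h2
        obtain ⟨a, ha⟩ := h1.surjective (g.1 b)
        exact ⟨a, g.2 ha⟩
    · rename_i h1
      split
      · rename_i h2
        split
        · rename_i h3
          exact absurd (h3.comp h2) h1
        · rw [comp_zero]
      · rw [zero_comp]

/-- The extension-by-zero functor `α* : FB-Mod → FI-Mod`. -/
noncomputable def alphaStar : (FBob ⥤ AddCommGrpCat) ⥤ (FIob ⥤ AddCommGrpCat) where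
  obj := alphaStarObj
  map {W W'} η :=
    { app := fun T => η.app ⟨T.s⟩
      naturality := by
        intro S T f
        dsimp [alphaStarObj]
        by_cases h : Function.Bijective f.1
        · rw [dif_pos h, dif_pos h]
          exact η.naturality (show (⟨S.s⟩ : FBob) ⟶ ⟨T.s⟩ from ⟨f.1, h⟩)
        · rw [dif_neg h, dif_neg h, zero_comp, comp_zero] }
  map_id W := by
    ext T
    rfl
  map_comp {W W' W''} η θ := by
    ext T
    rfl

/-- The canonical map `⊕_{S ⊊ T} V(S) → V(T)` induced by the inclusions of proper
subsets. -/
noncomputable def canMap (V : FIob ⥤ AddCommGrpCat) (B : FBob) :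
    AddCommGrpCat.of (DirectSum {S : Finset ℕ // S ⊂ B.s} (fun S => (V.obj ⟨S.1⟩ : Type)))
      ⟶ V.obj ⟨B.s⟩ :=
  AddCommGrpCat.ofHom (DirectSum.toAddMonoid fun S =>
    (V.map ⟨fun x => ⟨x.1, S.2.subset x.2⟩, fun a b hab => by cases a; cases b; simpa using hab⟩).hom)

namespace H0Aux

/-- The subgroup of `V(B)` generated by images of all non-surjective injections. -/
noncomputable def NN (V : FIob ⥤ AddCommGrpCat) (B : Finset ℕ) : AddSubgroup (V.obj ⟨B⟩) :=
  ⨆ p : Σ A : FIob, {g : A ⟶ (⟨B⟩ : FIob) // ¬ Function.Surjective g.1}, (V.map p.2.1).hom.range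

lemma mem_NN {V : FIob ⥤ AddCommGrpCat} {B : Finset ℕ} {A : FIob} (g : A ⟶ (⟨B⟩ : FIob))
    (hg : ¬ Function.Surjective g.1) (x : V.obj A) : V.map g x ∈ NN V B :=
  AddSubgroup.mem_iSup_of_mem ⟨A, g, hg⟩ ⟨x, rfl⟩

lemma NN_le {V : FIob ⥤ AddCommGrpCat} {B : Finset ℕ} {K : AddSubgroup (V.obj ⟨B⟩)}
    (h : ∀ (A : FIob) (g : A ⟶ (⟨B⟩ : FIob)), ¬ Function.Surjective g.1 →
      ∀ x, V.map g x ∈ K) : NN V B ≤ K :=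
  iSup_le fun p => by rintro _ ⟨x, rfl⟩; exact h p.1 p.2.1 p.2.2 x

/-- A morphism in FB, viewed in FI. -/
def toFI {B B' : FBob} (f : B ⟶ B') : (⟨B.s⟩ : FIob) ⟶ (⟨B'.s⟩ : FIob) :=
  ⟨f.1, f.2.injective⟩

lemma comp_surj {A : FIob} {B B' : FBob} (f : B ⟶ B') (g : A ⟶ (⟨B.s⟩ : FIob))
    (hg : ¬ Function.Surjective g.1) : ¬ Function.Surjective (g ≫ toFI f).1 := by
  intro h
  apply hg
  intro b
  obtain ⟨a, ha⟩ := h (f.1 b)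
  exact ⟨a, f.2.injective ha⟩

lemma nn_cond (V : FIob ⥤ AddCommGrpCat) {B B' : FBob} (f : B ⟶ B') :
    NN V B.s ≤ (NN V B'.s).comap (V.map (toFI f)).hom := by
  refine NN_le fun A g hg x => ?_
  have : V.map (toFI f) (V.map g x) = V.map (g ≫ toFI f) x := by
    rw [V.map_comp]; rfl
  rw [AddSubgroup.mem_comap, this]
  exact mem_NN (g ≫ toFI f) (comp_surj f g hg) x

/-- The functor `H₀`. -/
noncomputable def H0 : (FIob ⥤ AddCommGrpCat) ⥤ (FBob ⥤ AddCommGrpCat) where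
  obj V :=
    { obj := fun B => AddCommGrpCat.of ((V.obj ⟨B.s⟩) ⧸ NN V B.s)
      map := fun {B B'} f => AddCommGrpCat.ofHom (QuotientAddGroup.map _ _ (V.map (toFI f)).hom (nn_cond V f))
      map_id := fun B => by
        ext v
        show QuotientAddGroup.mk (V.map (toFI (𝟙 B)) v) = _
        have : toFI (𝟙 B) = 𝟙 (⟨B.s⟩ : FIob) := rfl
        rw [this, V.map_id]
        rfl
      map_comp := fun {B B' B''} f g => by
        ext v
        show QuotientAddGroup.mk (V.map (toFI (f ≫ g)) v) = _
        have : toFI (f ≫ g) = toFI f ≫ toFI g := rfl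
        rw [this, V.map_comp]
        rfl }
  map {V V'} φ :=
    { app := fun B => AddCommGrpCat.ofHom (QuotientAddGroup.map _ _ (φ.app ⟨B.s⟩).hom
        (NN_le fun A g hg x => by
          have : φ.app ⟨B.s⟩ (V.map g x) = V'.map g (φ.app A x) := by
            have := φ.naturality g
            exact congrFun (congrArg (fun (h : V.obj A ⟶ V'.obj ⟨B.s⟩) => (h : V.obj A → V'.obj ⟨B.s⟩)) this) x
          rw [AddSubgroup.mem_comap, this]
          exact mem_NN (V := V') g hg (φ.app A x)))
      naturality := fun {B B'} f => by
        refine AddCommGrpCat.hom_ext (QuotientAddGroup.addMonoidHom_ext _ (AddMonoidHom.ext (M := V.obj ⟨B.s⟩) (N := V'.obj ⟨B'.s⟩ ⧸ NN V' B'.s) fun v => ?_))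
        show QuotientAddGroup.mk (φ.app ⟨B'.s⟩ (V.map (toFI f) v)) =
          QuotientAddGroup.mk (V'.map (toFI f) (φ.app ⟨B.s⟩ v))
        have := φ.naturality (toFI f)
        have h2 := congrFun (congrArg (fun (h : V.obj ⟨B.s⟩ ⟶ V'.obj ⟨B'.s⟩) =>
          (h : V.obj ⟨B.s⟩ → V'.obj ⟨B'.s⟩)) this) v
        simp only at h2
        rw [show φ.app ⟨B'.s⟩ (V.map (toFI f) v) = V'.map (toFI f) (φ.app ⟨B.s⟩ v) from h2] }
  map_id V := by
    refine NatTrans.ext (funext fun B => AddCommGrpCat.hom_ext (QuotientAddGroup.addMonoidHom_ext _ (AddMonoidHom.ext (M := V.obj ⟨B.s⟩) (N := V.obj ⟨B.s⟩ ⧸ NN V B.s) fun v => ?_)))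
    rfl
  map_comp {V V' V''} φ ψ := by
    refine NatTrans.ext (funext fun B => AddCommGrpCat.hom_ext (QuotientAddGroup.addMonoidHom_ext _ (AddMonoidHom.ext (M := V.obj ⟨B.s⟩) (N := V''.obj ⟨B.s⟩ ⧸ NN V'' B.s) fun v => ?_)))
    rfl

end H0Aux
namespace H0Aux

lemma comp_fun {X Y Z : AddCommGrpCat} (f : X ⟶ Y) (g : Y ⟶ Z) (x : X) :
    (f ≫ g) x = g (f x) := rfl

lemma nn_ker {V : FIob ⥤ AddCommGrpCat} {W : FBob ⥤ AddCommGrpCat} (ε : V ⟶ alphaStar.obj W)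
    (B : FBob) : NN V B.s ≤ (ε.app ⟨B.s⟩).hom.ker := by
  refine NN_le fun A g hg y => ?_
  have h1 : ε.app ⟨B.s⟩ (V.map g y) = (alphaStarObj W).map g (ε.app A y) := by
    rw [← comp_fun, ε.naturality g, comp_fun]; rfl
  have h2 : ¬ Function.Bijective g.1 := fun hb => hg hb.surjective
  rw [AddMonoidHom.mem_ker, h1]
  show (if h : Function.Bijective g.1 then W.map ⟨g.1, h⟩ else 0) (ε.app A y) = 0
  rw [dif_neg h2]
  rfl

/-- The adjunction `H₀ ⊣ α*`. -/
noncomputable def adj : H0 ⊣ alphaStar :=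
  Adjunction.mkOfHomEquiv
    { homEquiv := fun V W =>
        { toFun := fun η =>
            { app := fun T => AddCommGrpCat.ofHom ((η.app ⟨T.s⟩).hom.comp (QuotientAddGroup.mk' (NN V T.s)))
              naturality := fun {S T} f => by
                ext x
                show η.app ⟨T.s⟩ (QuotientAddGroup.mk (V.map f x)) =
                  (if h : Function.Bijective f.1 then W.map ⟨f.1, h⟩ else 0)
                    (η.app ⟨S.s⟩ (QuotientAddGroup.mk x))
                by_cases h : Function.Bijective f.1
                · rw [dif_pos h]
                  have h1 : η.app ⟨T.s⟩
                      ((H0.obj V).map (⟨f.1, h⟩ : (⟨S.s⟩ : FBob) ⟶ ⟨T.s⟩)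
                        (QuotientAddGroup.mk x)) =
                      W.map (⟨f.1, h⟩ : (⟨S.s⟩ : FBob) ⟶ ⟨T.s⟩)
                        (η.app ⟨S.s⟩ (QuotientAddGroup.mk x)) := by
                    exact ConcreteCategory.congr_hom (η.naturality _) _
                  exact h1
                · rw [dif_neg h]
                  have hs : ¬ Function.Surjective f.1 := fun hs => h ⟨f.2, hs⟩
                  have hz : (QuotientAddGroup.mk (V.map f x) :
                      V.obj T ⧸ NN V T.s) = 0 :=
                    (QuotientAddGroup.eq_zero_iff _).mpr (mem_NN f hs x)
                  rw [hz]; refine (map_zero (η.app ⟨T.s⟩).hom).trans ?_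
                  rfl }
          invFun := fun ε =>
            { app := fun B => AddCommGrpCat.ofHom (QuotientAddGroup.lift (NN V B.s) (ε.app ⟨B.s⟩).hom
                (fun x hx => AddMonoidHom.mem_ker.mp (nn_ker ε B hx)))
              naturality := fun {B B'} f => by
                ext x
                refine QuotientAddGroup.induction_on x fun v => ?_
                show ε.app ⟨B'.s⟩ (V.map (toFI f) v) = W.map f (ε.app ⟨B.s⟩ v)
                have h1 : ε.app ⟨B'.s⟩ (V.map (toFI f) v) =
                    (alphaStarObj W).map (toFI f) (ε.app ⟨B.s⟩ v) := by
                  rw [← comp_fun, ε.naturality, comp_fun]; rfl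
                rw [h1]
                show (if h : Function.Bijective f.1 then W.map ⟨f.1, h⟩ else 0)
                  (ε.app ⟨B.s⟩ v) = _
                rw [dif_pos f.2]
                rfl }
          left_inv := fun η => by
            ext B x
            refine QuotientAddGroup.induction_on x fun v => ?_
            rfl
          right_inv := fun ε => by
            ext T x
            rfl }
      homEquiv_naturality_left_symm := fun {V V' W} φ g => by
        ext B x
        refine QuotientAddGroup.induction_on x fun v => ?_
        rfl
      homEquiv_naturality_right := fun {V W W'} η θ => by
        ext T x
        rfl }

end H0Aux
namespace H0Aux

lemma nn_eq_range (V : FIob ⥤ AddCommGrpCat) (B : FBob) :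
    NN V B.s = (canMap V B).hom.range := by
  apply le_antisymm
  · refine NN_le fun A g hg x => ?_
    set S : Finset ℕ := Finset.image (fun a => ((g.1 a : ℕ))) A.s.attach with hSdef
    have hmem : ∀ a : ↥A.s, ((g.1 a : ℕ)) ∈ S := by
      intro a
      rw [hSdef]
      exact Finset.mem_image_of_mem _ (Finset.mem_attach _ _)
    have hsub : S ⊆ B.s := by
      intro n hn
      rw [hSdef] at hn
      obtain ⟨a, _, rfl⟩ := Finset.mem_image.mp hn
      exact (g.1 a).2
    have hS : S ⊂ B.s := by
      refine ⟨hsub, fun hBS => ?_⟩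
      apply hg
      intro b
      have hb : (b : ℕ) ∈ S := hBS b.2
      rw [hSdef] at hb
      obtain ⟨a, _, hab⟩ := Finset.mem_image.mp hb
      exact ⟨a, Subtype.ext hab⟩
    let e : A ⟶ (⟨S⟩ : FIob) :=
      ⟨fun a => ⟨(g.1 a : ℕ), hmem a⟩,
        fun a b hab => g.2 (Subtype.ext (by simpa using hab))⟩
    let incl : (⟨S⟩ : FIob) ⟶ (⟨B.s⟩ : FIob) :=
      ⟨fun x => ⟨x.1, hS.subset x.2⟩, fun a b hab => by
        cases a; cases b; simpa using hab⟩
    have hfact : g = e ≫ incl := by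
      apply Subtype.ext; funext a; apply Subtype.ext; rfl
    refine ⟨DirectSum.of (fun S' : {S : Finset ℕ // S ⊂ B.s} => (V.obj ⟨S'.1⟩ : Type))
      ⟨S, hS⟩ (V.map e x), ?_⟩
    show (DirectSum.toAddMonoid _) _ = _
    rw [DirectSum.toAddMonoid_of, hfact, V.map_comp]
    rfl
  · rintro _ ⟨y, rfl⟩
    refine DirectSum.induction_on y ?_ ?_ ?_
    · rw [map_zero]; exact zero_mem _
    · intro S m
      have h1 : canMap V B (DirectSum.of _ S m) =
          V.map (⟨fun x => ⟨x.1, S.2.subset x.2⟩, fun a b hab => by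
            cases a; cases b; simpa using hab⟩ : (⟨S.1⟩ : FIob) ⟶ (⟨B.s⟩ : FIob)) m :=
        DirectSum.toAddMonoid_of _ _ _
      rw [h1]
      refine mem_NN _ ?_ m
      obtain ⟨b, hbB, hbS⟩ := Finset.exists_of_ssubset S.2
      intro hsurj
      obtain ⟨z, hz⟩ := hsurj ⟨b, hbB⟩
      have hz2 : (z : ℕ) = b := congrArg Subtype.val hz
      exact hbS (hz2 ▸ z.2)
    · intro a b ha hb
      rw [map_add]; exact add_mem ha hb

end H0Aux

/-- `H₀(V)(T) = coker(⊕_{S ⊊ T} V(S) → V(T))` defines a functor `H₀` from FI-modules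
to FB-modules, and `H₀` is left adjoint to the extension-by-zero functor `α*`. -/
theorem stmt1 :
    ∃ H0 : (FIob ⥤ AddCommGrpCat) ⥤ (FBob ⥤ AddCommGrpCat),
      Nonempty (H0 ⊣ alphaStar) ∧
      ∀ (V : FIob ⥤ AddCommGrpCat) (B : FBob),
        Nonempty ((H0.obj V).obj B ≅ cokernel (canMap V B)) := by
  refine ⟨H0Aux.H0, ⟨H0Aux.adj⟩, fun V B => ⟨?_⟩⟩
  refine eqToIso ?_ ≪≫ (AddCommGrpCat.cokernelIsoQuotient (canMap V B)).symm
  show AddCommGrpCat.of ((V.obj ⟨B.s⟩) ⧸ H0Aux.NN V B.s) =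
    AddCommGrpCat.of ((V.obj ⟨B.s⟩) ⧸ (canMap V B).hom.range)
  rw [H0Aux.nn_eq_range]
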